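/- For every n ≥ 3, in the directed graph on P'(n) with EM and SM edges as defined, the partition {3, 1, 1, ..., 1} (one part equal to 3 and n-3 parts equal to 1) has exactly one incoming edge, namely the EM edge from {2, 1, ..., 1}; consequently, removing that single edge disconnects the graph from being strongly connected, so the graph is not strongly 2-edge-connected. -/
import Mathlib


/-- A multiset of positive integers summing to `n`, i.e. a partition of `n`. -/
def IsPartitionOf (n : ℕ) (p : Multiset ℕ) : Prop :=
  (∀ m ∈ p, 0 < m) ∧ p.sum = n

/-- A vertex of the graph on `P'(n)`: a partition of `n` other than `{1,…,1}`. -/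
def PVertex (n : ℕ) (p : Multiset ℕ) : Prop :=
  IsPartitionOf n p ∧ p ≠ Multiset.replicate n 1

/-- External Merge edge: two parts `i, j` are replaced by the single part `i + j`. -/
def EMStep (p p' : Multiset ℕ) : Prop :=
  ∃ (i j : ℕ) (q : Multiset ℕ), p = i ::ₘ j ::ₘ q ∧ p' = (i + j) ::ₘ q

/-- Minimal Sideward Merge edge: either remove two units from a single part `k ≥ 3`
(giving new parts `2` and `k - 2`), or remove one unit from each of two parts `i, j`
not both becoming zero (giving new parts `2, i - 1, j - 1`, with zero parts deleted). -/
def SMStep (p p' : Multiset ℕ) : Prop :=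
  (∃ (m : ℕ) (q : Multiset ℕ), p = m ::ₘ q ∧ 3 ≤ m ∧ p' = 2 ::ₘ (m - 2) ::ₘ q) ∨
  (∃ (i j : ℕ) (q : Multiset ℕ), p = i ::ₘ j ::ₘ q ∧ ¬(i = 1 ∧ j = 1) ∧
      p' = (2 ::ₘ q) + Multiset.filter (fun m => m ≠ 0) ((i - 1) ::ₘ {j - 1}))

/-- An edge of the EM–SM graph on partitions. -/
def MergeStep (p p' : Multiset ℕ) : Prop := EMStep p p' ∨ SMStep p p'

/-- An edge of the EM–SM graph staying within the vertex set `P'(n)`. -/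
def StepOn (n : ℕ) (p p' : Multiset ℕ) : Prop :=
  MergeStep p p' ∧ PVertex n p ∧ PVertex n p'

lemma sm_two_mem {p p' : Multiset ℕ} (h : SMStep p p') : 2 ∈ p' := by
  rcases h with ⟨m, q, _, _, rfl⟩ | ⟨i, j, q, _, _, rfl⟩
  · exact Multiset.mem_cons_self _ _
  · exact Multiset.mem_add.mpr (Or.inl (Multiset.mem_cons_self _ _))

lemma two_not_mem_T (n : ℕ) : 2 ∉ (3 ::ₘ Multiset.replicate (n - 3) 1) := by
  simp [Multiset.mem_cons, Multiset.mem_replicate]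

lemma A_eq (n : ℕ) (hn : 3 ≤ n) :
    (2 ::ₘ Multiset.replicate (n - 2) 1) = 2 ::ₘ 1 ::ₘ Multiset.replicate (n - 3) 1 := by
  have : n - 2 = (n - 3) + 1 := by omega
  rw [this, Multiset.replicate_succ]

lemma vertexA (n : ℕ) (hn : 3 ≤ n) : PVertex n (2 ::ₘ Multiset.replicate (n - 2) 1) := by
  refine ⟨⟨?_, ?_⟩, ?_⟩
  · intro m hm
    rcases Multiset.mem_cons.mp hm with rfl | hm
    · norm_num
    · rw [Multiset.eq_of_mem_replicate hm]; norm_num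
  · rw [Multiset.sum_cons, Multiset.sum_replicate, smul_eq_mul]; omega
  · intro h
    have : (2 : ℕ) ∈ Multiset.replicate n 1 := h ▸ Multiset.mem_cons_self _ _
    have := Multiset.eq_of_mem_replicate this
    omega

lemma vertexT (n : ℕ) (hn : 3 ≤ n) : PVertex n (3 ::ₘ Multiset.replicate (n - 3) 1) := by
  refine ⟨⟨?_, ?_⟩, ?_⟩
  · intro m hm
    rcases Multiset.mem_cons.mp hm with rfl | hm
    · norm_num
    · rw [Multiset.eq_of_mem_replicate hm]; norm_num
  · rw [Multiset.sum_cons, Multiset.sum_replicate, smul_eq_mul]; omega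
  · intro h
    have : (3 : ℕ) ∈ Multiset.replicate n 1 := h ▸ Multiset.mem_cons_self _ _
    have := Multiset.eq_of_mem_replicate this
    omega

lemma emAT (n : ℕ) (hn : 3 ≤ n) :
    EMStep (2 ::ₘ Multiset.replicate (n - 2) 1) (3 ::ₘ Multiset.replicate (n - 3) 1) := by
  exact ⟨2, 1, Multiset.replicate (n - 3) 1, A_eq n hn, rfl⟩

lemma unique_in (n : ℕ) (hn : 3 ≤ n) (p : Multiset ℕ) (hp : PVertex n p) :
    MergeStep p (3 ::ₘ Multiset.replicate (n - 3) 1) ↔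
      p = 2 ::ₘ Multiset.replicate (n - 2) 1 := by
  constructor
  · rintro (⟨i, j, q, rfl, h'⟩ | hsm)
    · have hi : 0 < i := hp.1.1 i (Multiset.mem_cons_self _ _)
      have hj : 0 < j := hp.1.1 j (Multiset.mem_cons.mpr (Or.inr (Multiset.mem_cons_self _ _)))
      rcases Multiset.cons_eq_cons.mp h'.symm with ⟨h3, hq⟩ | ⟨hne, cs, hq, hrep⟩
      · rw [A_eq n hn, hq]
        have : (i = 1 ∧ j = 2) ∨ (i = 2 ∧ j = 1) := by omega
        rcases this with ⟨rfl, rfl⟩ | ⟨rfl, rfl⟩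
        · rw [Multiset.cons_swap]
        · rfl
      · exfalso
        have : i + j ∈ Multiset.replicate (n - 3) 1 := hrep ▸ Multiset.mem_cons_self _ _
        have := Multiset.eq_of_mem_replicate this
        omega
    · exact absurd (sm_two_mem hsm) (two_not_mem_T n)
  · rintro rfl
    exact Or.inl (emAT n hn)

/-- For every `n ≥ 3`, the partition `{3,1,…,1}` has exactly one incoming edge in the
EM–SM graph on `P'(n)`, namely the EM edge from `{2,1,…,1}` (and no incoming SM edge);
consequently, after removing that single edge the graph is no longer strongly
connected, so the graph is not strongly 2-edge-connected. -/
theorem stmt12 (n : ℕ) (hn : 3 ≤ n) :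
    (∀ p : Multiset ℕ, PVertex n p →
      (MergeStep p (3 ::ₘ Multiset.replicate (n - 3) 1) ↔
        p = 2 ::ₘ Multiset.replicate (n - 2) 1)) ∧
    EMStep (2 ::ₘ Multiset.replicate (n - 2) 1) (3 ::ₘ Multiset.replicate (n - 3) 1) ∧
    (¬ ∃ p : Multiset ℕ, PVertex n p ∧
        SMStep p (3 ::ₘ Multiset.replicate (n - 3) 1)) ∧
    ¬ (∀ p p' : Multiset ℕ, PVertex n p → PVertex n p' →
        Relation.ReflTransGen
          (fun q q' => StepOn n q q' ∧
            ¬(q = 2 ::ₘ Multiset.replicate (n - 2) 1 ∧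
              q' = 3 ::ₘ Multiset.replicate (n - 3) 1)) p p') := by
  refine ⟨unique_in n hn, emAT n hn, ?_, ?_⟩
  · rintro ⟨p, _, hsm⟩
    exact absurd (sm_two_mem hsm) (two_not_mem_T n)
  · intro H
    have h := H _ _ (vertexA n hn) (vertexT n hn)
    rcases h.cases_tail with heq | ⟨c, _, ⟨⟨hm, hc, _⟩, hne⟩⟩
    · have : (2 : ℕ) ∈ (3 ::ₘ Multiset.replicate (n - 3) 1) :=
        heq ▸ Multiset.mem_cons_self _ _
      exact two_not_mem_T n this
    · have := (unique_in n hn c hc).mp hm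
      exact hne ⟨this, rfl⟩
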